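/- Let A be an m×n real matrix and b ∈ ℝᵐ, and suppose X = {x ∈ ℝⁿ : A x ≤ b} is nonempty. Let Ā = [A | −b], let K = { Āᵀ u : u ∈ ℝᵐ, u ≥ 0 } ⊆ ℝⁿ⁺¹ be the convex cone generated by the rows of Ā, and let ē = (0,…,0,1) ∈ ℝⁿ⁺¹. Then γ := dist(ē, K) > 0 and min_{x ∈ X} ½(‖x‖² + 1) = 1/(2γ²). -/

import Mathlib

lemma euclid_inner_eq {k : ℕ} (x y : EuclideanSpace ℝ (Fin k)) :
    (inner ℝ x y : ℝ) = ∑ i, x i * y i := by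
  simp [PiLp.inner_apply, RCLike.inner_apply', conj_trivial, mul_comm]

lemma euclid_norm_sq {k : ℕ} (x : EuclideanSpace ℝ (Fin k)) :
    ‖x‖ ^ 2 = ∑ i, x i ^ 2 := by
  rw [← real_inner_self_eq_norm_sq, euclid_inner_eq]
  simp [sq]

/-- With `X = {x : A x ≤ b}` nonempty, `Ā = [A | −b]`,
`K = {Āᵀu : u ≥ 0} ⊆ ℝⁿ⁺¹` and `ē = (0,…,0,1)`, one has `γ := dist(ē, K) > 0` and
`min_{x ∈ X} ½(‖x‖² + 1) = 1/(2γ²)` (the minimum being attained: `IsLeast`). -/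
theorem least_norm_eq_inv_cone_dist
    (m n : ℕ) (A : Matrix (Fin m) (Fin n) ℝ) (b : Fin m → ℝ)
    (hne : {x : EuclideanSpace ℝ (Fin n) | A.mulVec x ≤ b}.Nonempty)
    (Abar : Matrix (Fin m) (Fin (n + 1)) ℝ)
    (hAbar : Abar = Matrix.of fun i => Fin.snoc (A i) (-(b i)))
    (K : Set (EuclideanSpace ℝ (Fin (n + 1))))
    (hK : K = {z : EuclideanSpace ℝ (Fin (n + 1)) | ∃ u : Fin m → ℝ, 0 ≤ u ∧
        z = (WithLp.equiv 2 (Fin (n + 1) → ℝ)).symm (Abar.transpose.mulVec u)})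
    (ebar : EuclideanSpace ℝ (Fin (n + 1)))
    (hebar : ebar = EuclideanSpace.single (Fin.last n) 1) :
    0 < Metric.infDist ebar K ∧
      IsLeast {w : ℝ | ∃ x : EuclideanSpace ℝ (Fin n),
          A.mulVec x ≤ b ∧ w = (1 / 2) * (‖x‖ ^ 2 + 1)}
        (1 / (2 * (Metric.infDist ebar K) ^ 2)) := by
  classical
  obtain ⟨x₀, hx₀⟩ := hne
  -- membership in K, pointwise
  have hKmem : ∀ z : EuclideanSpace ℝ (Fin (n + 1)), z ∈ K ↔
      ∃ u : Fin m → ℝ, 0 ≤ u ∧ ∀ j, z j = ∑ i, Abar i j * u i := by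
    intro z
    rw [hK]
    constructor
    · rintro ⟨u, hu, rfl⟩
      refine ⟨u, hu, fun j => ?_⟩
      show Abar.transpose.mulVec u j = _
      simp [Matrix.mulVec, dotProduct, Matrix.transpose_apply]
    · rintro ⟨u, hu, hz⟩
      refine ⟨u, hu, ?_⟩
      ext j
      rw [hz j]
      show _ = Abar.transpose.mulVec u j
      simp [Matrix.mulVec, dotProduct, Matrix.transpose_apply]
  -- row sums of Abar
  have hrow : ∀ (i : Fin m) (y : EuclideanSpace ℝ (Fin (n + 1))),
      ∑ j, Abar i j * y j
        = A.mulVec (fun j => y (Fin.castSucc j)) i - b i * y (Fin.last n) := by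
    intro i y
    subst hAbar
    rw [Fin.sum_univ_castSucc]
    simp only [Matrix.of_apply, Fin.snoc_castSucc, Fin.snoc_last, Matrix.mulVec,
      dotProduct]
    ring
  -- the pairing identity
  have hpair : ∀ z ∈ K, ∀ (u : Fin m → ℝ), (∀ j, z j = ∑ i, Abar i j * u i) →
      ∀ y : EuclideanSpace ℝ (Fin (n + 1)),
      (inner ℝ z y : ℝ) = ∑ i, u i *
        (A.mulVec (fun j => y (Fin.castSucc j)) i - b i * y (Fin.last n)) := by
    intro z _ u hz y
    rw [euclid_inner_eq]
    calc ∑ j, z j * y j = ∑ j, ∑ i, Abar i j * u i * y j := by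
          refine Finset.sum_congr rfl fun j _ => ?_
          rw [hz j, Finset.sum_mul]
      _ = ∑ i, ∑ j, Abar i j * u i * y j := Finset.sum_comm
      _ = ∑ i, u i * ∑ j, Abar i j * y j := by
          refine Finset.sum_congr rfl fun i _ => ?_
          rw [Finset.mul_sum]
          refine Finset.sum_congr rfl fun j _ => ?_
          ring
      _ = _ := by
          refine Finset.sum_congr rfl fun i _ => ?_
          rw [hrow i y]
  have hebar_inner : ∀ y : EuclideanSpace ℝ (Fin (n + 1)),
      (inner ℝ ebar y : ℝ) = y (Fin.last n) := by
    intro y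
    rw [hebar, euclid_inner_eq]
    simp [EuclideanSpace.single_apply]
  -- norm splitting
  have hsplit : ∀ y : EuclideanSpace ℝ (Fin (n + 1)),
      ‖y‖ ^ 2 = (∑ j : Fin n, y (Fin.castSucc j) ^ 2) + y (Fin.last n) ^ 2 := by
    intro y
    rw [euclid_norm_sq, Fin.sum_univ_castSucc]
  -- S : feasible set
  set S : Set (EuclideanSpace ℝ (Fin n)) := {x | A.mulVec x ≤ b} with hS
  have hSclosed : IsClosed S := by
    have : S = ⋂ i, {x : EuclideanSpace ℝ (Fin n) |
        (inner ℝ ((WithLp.equiv 2 (Fin n → ℝ)).symm (A i)) x : ℝ) ≤ b i} := by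
      ext x
      simp only [hS, Set.mem_setOf_eq, Set.mem_iInter, Pi.le_def]
      constructor
      · intro h i
        rw [euclid_inner_eq]
        exact h i
      · intro h i
        have := h i
        rwa [euclid_inner_eq] at this
    rw [this]
    exact isClosed_iInter fun i =>
      isClosed_le (Continuous.inner continuous_const continuous_id) continuous_const
  -- minimizer of the norm on S
  obtain ⟨xs, hxsS, hxsmin⟩ : ∃ x ∈ S, ∀ y ∈ S, ‖x‖ ≤ ‖y‖ := by
    have hcpt : IsCompact (S ∩ Metric.closedBall 0 ‖x₀‖) :=
      (isCompact_closedBall (0 : EuclideanSpace ℝ (Fin n)) ‖x₀‖).inter_left hSclosed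
    have hne' : (S ∩ Metric.closedBall 0 ‖x₀‖).Nonempty :=
      ⟨x₀, hx₀, by simp⟩
    obtain ⟨xs, hxs, hmin'⟩ := hcpt.exists_isMinOn hne' continuous_norm.continuousOn
    have hmin : ∀ y ∈ S ∩ Metric.closedBall 0 ‖x₀‖, ‖xs‖ ≤ ‖y‖ := fun y hy => hmin' hy
    refine ⟨xs, hxs.1, fun y hy => ?_⟩
    rcases le_or_gt ‖y‖ ‖x₀‖ with h | h
    · exact hmin y ⟨hy, by simpa [Metric.mem_closedBall, dist_eq_norm] using h⟩
    · have : ‖xs‖ ≤ ‖x₀‖ := hmin x₀ ⟨hx₀, by simp⟩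
      linarith
  set N : ℝ := ‖xs‖ ^ 2 + 1 with hN
  have hN1 : (1 : ℝ) ≤ N := by nlinarith [sq_nonneg ‖xs‖]
  have hNpos : (0 : ℝ) < N := by linarith
  have hsN : (0 : ℝ) < Real.sqrt N := Real.sqrt_pos.mpr hNpos
  -- lifted minimizer
  set w : EuclideanSpace ℝ (Fin (n + 1)) :=
    (WithLp.equiv 2 (Fin (n + 1) → ℝ)).symm (Fin.snoc (fun j => xs j) 1) with hw
  have hwcast : ∀ j : Fin n, w (Fin.castSucc j) = xs j := by
    intro j
    rw [hw]
    simp only [WithLp.equiv_symm_apply, PiLp.toLp_apply, Fin.snoc_castSucc]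
  have hwlast : w (Fin.last n) = 1 := by
    rw [hw]
    simp only [WithLp.equiv_symm_apply, PiLp.toLp_apply, Fin.snoc_last]
  have hwnorm : ‖w‖ ^ 2 = N := by
    rw [hsplit w, hwlast, hN, euclid_norm_sq xs]
    simp [hwcast]
  have hKne : K.Nonempty := by
    refine ⟨0, (hKmem 0).mpr ⟨0, le_refl _, fun j => by simp⟩⟩
  -- ∀ z ∈ K, (√N)⁻¹ ≤ dist ebar z : the lower bound
  have hlow : ∀ z ∈ K, (Real.sqrt N)⁻¹ ≤ dist ebar z := by
    intro z hz
    obtain ⟨u, hu, hzu⟩ := (hKmem z).mp hz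
    have hzw : (inner ℝ z w : ℝ) ≤ 0 := by
      rw [hpair z hz u hzu w]
      refine Finset.sum_nonpos fun i _ => ?_
      have h1 : A.mulVec (fun j => w (Fin.castSucc j)) i - b i * w (Fin.last n) ≤ 0 := by
        have : A.mulVec (fun j => w (Fin.castSucc j)) i = A.mulVec xs i := by
          congr 1
          funext j
          exact hwcast j
        rw [this, hwlast, mul_one]
        have hxi : A.mulVec xs i ≤ b i := hxsS i
        linarith
      exact mul_nonpos_of_nonneg_of_nonpos (hu i) h1
    have hew : (inner ℝ ebar w : ℝ) = 1 := by rw [hebar_inner w, hwlast]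
    have hkey : (1 : ℝ) ≤ (inner ℝ (ebar - z) w : ℝ) := by
      rw [inner_sub_left, hew]
      linarith
    have hcs : (inner ℝ (ebar - z) w : ℝ) ≤ ‖ebar - z‖ * ‖w‖ := real_inner_le_norm _ _
    have hwn : ‖w‖ = Real.sqrt N := by
      rw [← Real.sqrt_sq (norm_nonneg w), hwnorm]
    rw [dist_eq_norm]
    rw [hwn] at hcs
    rw [inv_le_iff_one_le_mul₀ hsN]
    linarith
  have hγlow : (Real.sqrt N)⁻¹ ≤ Metric.infDist ebar K := by
    by_contra h
    push_neg at h
    obtain ⟨z, hz, hdz⟩ := (Metric.infDist_lt_iff hKne).mp h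
    exact absurd (hlow z hz) (not_le.mpr hdz)
  have hγpos : 0 < Metric.infDist ebar K := lt_of_lt_of_le (by positivity) hγlow
  set γ : ℝ := Metric.infDist ebar K with hγ
  -- cone/convexity structure of K
  have hKadd : ∀ z₁ ∈ K, ∀ z₂ ∈ K, z₁ + z₂ ∈ K := by
    intro z₁ h₁ z₂ h₂
    obtain ⟨u₁, hu₁, hz₁⟩ := (hKmem z₁).mp h₁
    obtain ⟨u₂, hu₂, hz₂⟩ := (hKmem z₂).mp h₂
    refine (hKmem _).mpr ⟨u₁ + u₂, fun i => add_nonneg (hu₁ i) (hu₂ i), fun j => ?_⟩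
    have : (z₁ + z₂) j = z₁ j + z₂ j := rfl
    rw [this, hz₁ j, hz₂ j, ← Finset.sum_add_distrib]
    refine Finset.sum_congr rfl fun i _ => ?_
    simp [mul_add]
  have hKsmul : ∀ (c : ℝ), 0 ≤ c → ∀ z ∈ K, c • z ∈ K := by
    intro c hc z hz
    obtain ⟨u, hu, hzu⟩ := (hKmem z).mp hz
    refine (hKmem _).mpr ⟨c • u, fun i => mul_nonneg hc (hu i), fun j => ?_⟩
    have : (c • z) j = c * z j := rfl
    rw [this, hzu j, Finset.mul_sum]
    refine Finset.sum_congr rfl fun i _ => ?_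
    simp [Pi.smul_apply, smul_eq_mul]
    ring
  have hKconv : Convex ℝ K := by
    intro z₁ h₁ z₂ h₂ a c ha hc _
    exact hKadd _ (hKsmul a ha z₁ h₁) _ (hKsmul c hc z₂ h₂)
  -- projection onto closure K
  set C : Set (EuclideanSpace ℝ (Fin (n + 1))) := closure K with hC
  have hCconv : Convex ℝ C := hKconv.closure
  have hCne : C.Nonempty := hKne.closure
  have hKC : K ⊆ C := subset_closure
  obtain ⟨p, hpC, hpmin⟩ := exists_norm_eq_iInf_of_complete_convex hCne
    (isClosed_closure.isComplete) hCconv ebar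
  have hvar : ∀ z ∈ C, (inner ℝ (ebar - p) (z - p) : ℝ) ≤ 0 :=
    (norm_eq_iInf_iff_real_inner_le_zero hCconv hpC).mp hpmin
  have hpdist : ‖ebar - p‖ = γ := by
    rw [hγ, ← Metric.infDist_closure (s := K), ← hC, Metric.infDist_eq_iInf, hpmin]
    simp only [dist_eq_norm]
  set q : EuclideanSpace ℝ (Fin (n + 1)) := ebar - p with hq
  have hqnorm : ‖q‖ = γ := hpdist
  -- ⟪q, p⟫ = 0
  have hqp : (inner ℝ q p : ℝ) = 0 := by
    have h0 : (0 : EuclideanSpace ℝ (Fin (n + 1))) ∈ C :=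
      hKC ((hKmem 0).mpr ⟨0, le_refl _, fun j => by simp⟩)
    have h2 : (2 : ℝ) • p ∈ C := by
      rcases mem_closure_iff_seq_limit.mp hpC with ⟨f, hf, hlim⟩
      exact mem_closure_iff_seq_limit.mpr ⟨fun k => (2 : ℝ) • f k,
        fun k => hKsmul 2 (by norm_num) _ (hf k),
        (continuous_const_smul (2 : ℝ)).continuousAt.tendsto.comp hlim⟩
    have ha := hvar _ h0
    have hb := hvar _ h2
    rw [zero_sub, inner_neg_right] at ha
    have h2p : (2 : ℝ) • p - p = p := by
      rw [two_smul]; abel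
    rw [h2p] at hb
    linarith
  -- ⟪q, z⟫ ≤ 0 for z ∈ K
  have hqz : ∀ z ∈ K, (inner ℝ q z : ℝ) ≤ 0 := by
    intro z hz
    have hpz : p + z ∈ C := by
      rcases mem_closure_iff_seq_limit.mp hpC with ⟨f, hf, hlim⟩
      refine mem_closure_iff_seq_limit.mpr ⟨fun k => f k + z,
        fun k => hKadd _ (hf k) _ hz, ?_⟩
      exact ((continuous_id.add continuous_const).continuousAt.tendsto.comp hlim)
    have := hvar _ hpz
    rwa [add_sub_cancel_left] at this
  -- componentwise: A x̂ ≤ t̂ b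
  set xh : Fin n → ℝ := fun j => q (Fin.castSucc j) with hxh
  set th : ℝ := q (Fin.last n) with hth
  have hAq : ∀ i, A.mulVec xh i ≤ th * b i := by
    intro i
    set zi : EuclideanSpace ℝ (Fin (n + 1)) :=
      (WithLp.equiv 2 (Fin (n + 1) → ℝ)).symm (Abar.transpose.mulVec (Pi.single i 1)) with hzi
    have hziK : zi ∈ K := by
      rw [hK]
      exact ⟨Pi.single i 1, fun i' => by
        by_cases h : i' = i <;> simp [Pi.single_apply, h], rfl⟩
    obtain ⟨u, hu, hzu⟩ := (hKmem zi).mp hziK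
    have h1 : (inner ℝ zi q : ℝ) ≤ 0 := by
      rw [real_inner_comm]; exact hqz zi hziK
    have h2 : (inner ℝ zi q : ℝ)
        = A.mulVec xh i - b i * th := by
      have huq : ∀ j, zi j = ∑ i', Abar i' j * (Pi.single i 1 : Fin m → ℝ) i' := by
        intro j
        show Abar.transpose.mulVec (Pi.single i 1) j = _
        simp [Matrix.mulVec, dotProduct, Matrix.transpose_apply]
      rw [hpair zi hziK _ huq q]
      rw [Finset.sum_eq_single i]
      · simp [hxh, hth]
      · intro i' _ h
        simp [Pi.single_apply, h]
      · intro h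
        exact absurd (Finset.mem_univ i) h
    rw [h2] at h1
    linarith
  -- th = γ²
  have hthγ : th = γ ^ 2 := by
    have h1 : (inner ℝ ebar q : ℝ) = th := hebar_inner q
    have h2 : (inner ℝ ebar q : ℝ) = ‖q‖ ^ 2 := by
      have : ebar = p + q := by rw [hq]; abel
      rw [this, inner_add_left, real_inner_self_eq_norm_sq, real_inner_comm, hqp, zero_add]
    rw [h1, hqnorm] at h2
    exact h2.symm ▸ h2
  have hthpos : 0 < th := by rw [hthγ]; positivity
  -- feasibility of th⁻¹ • xh
  have hfeas : (WithLp.equiv 2 (Fin n → ℝ)).symm (th⁻¹ • xh) ∈ S := by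
    intro i
    have : A.mulVec (th⁻¹ • xh) i = th⁻¹ * A.mulVec xh i := by
      simp [Matrix.mulVec_smul]
    show A.mulVec (th⁻¹ • xh) i ≤ b i
    rw [this]
    rw [inv_mul_le_iff₀ hthpos]
    linarith [hAq i]
  -- norm computation
  have hqsplit : ‖q‖ ^ 2 = (∑ j : Fin n, xh j ^ 2) + th ^ 2 := hsplit q
  have hxhnorm : ‖(WithLp.equiv 2 (Fin n → ℝ)).symm (th⁻¹ • xh)‖ ^ 2
      = th⁻¹ ^ 2 * ∑ j : Fin n, xh j ^ 2 := by
    rw [euclid_norm_sq, Finset.mul_sum]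
    refine Finset.sum_congr rfl fun j _ => ?_
    show (th⁻¹ * xh j) ^ 2 = _
    ring
  -- N ≤ 1/th
  have hbound : N ≤ th⁻¹ := by
    have h1 : ‖xs‖ ≤ ‖(WithLp.equiv 2 (Fin n → ℝ)).symm (th⁻¹ • xh)‖ :=
      hxsmin _ hfeas
    have h2 : ‖xs‖ ^ 2 ≤ ‖(WithLp.equiv 2 (Fin n → ℝ)).symm (th⁻¹ • xh)‖ ^ 2 :=
      pow_le_pow_left₀ (norm_nonneg _) h1 2
    rw [hxhnorm] at h2
    have hsum : (∑ j : Fin n, xh j ^ 2) = th - th ^ 2 := by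
      have := hqsplit
      rw [hqnorm, ← hthγ] at this
      linarith
    rw [hsum] at h2
    have hth2 : (0:ℝ) < th ^ 2 := by positivity
    have : th⁻¹ ^ 2 * (th - th ^ 2) = th⁻¹ - 1 := by
      field_simp
    rw [this] at h2
    rw [hN]
    linarith
  -- γ ≤ (√N)⁻¹
  have hγhigh : γ ≤ (Real.sqrt N)⁻¹ := by
    have h1 : γ ^ 2 ≤ N⁻¹ := by
      rw [← hthγ]
      exact (le_inv_comm₀ hNpos hthpos).mp hbound
    calc γ = Real.sqrt (γ ^ 2) := (Real.sqrt_sq hγpos.le).symm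
      _ ≤ Real.sqrt N⁻¹ := Real.sqrt_le_sqrt h1
      _ = (Real.sqrt N)⁻¹ := Real.sqrt_inv N
  have hγeq : γ = (Real.sqrt N)⁻¹ := le_antisymm hγhigh hγlow
  have hγsq : γ ^ 2 = N⁻¹ := by
    rw [hγeq, ← Real.sqrt_inv, Real.sq_sqrt (by positivity)]
  have hval : 1 / (2 * γ ^ 2) = (1 / 2) * (‖xs‖ ^ 2 + 1) := by
    rw [hγsq, ← hN]
    field_simp
  refine ⟨hγpos, ⟨⟨xs, hxsS, hval.symm ▸ rfl⟩, ?_⟩⟩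
  · rintro v ⟨x, hx, rfl⟩
    rw [hval]
    have := hxsmin x hx
    have h2 : ‖xs‖ ^ 2 ≤ ‖x‖ ^ 2 := pow_le_pow_left₀ (norm_nonneg _) this 2
    linarith
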